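/- Let p be a prime, S a finite p-group, and F a fusion system on S satisfying Axiom I_S (Aut_S(S) is a Sylow p-subgroup of Aut_F(S)) and Axiom II (every φ ∈ Hom_F(P,S) such that φ(P) is fully F-centralized extends to a morphism in Hom_F(N_φ,S)). Then every fully F-normalized subgroup of S is fully F-centralized. -/

import Mathlib

/-! ## Collections of morphisms between subgroups -/

section Collections

variable {S : Type*} [Group S]

/-- The conjugation homomorphism `P →* S`, `u ↦ s * u * s⁻¹`. -/
def conjHom (s : S) (P : Subgroup S) : P →* S :=
  (MulAut.conj s).toMonoidHom.comp P.subtype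

/-- A "collection" of morphism sets on the poset of subgroups of `S`:
for each pair of subgroups `P Q ≤ S` a set of group homomorphisms `P →* S`
(to be thought of as morphisms from `P` to `Q`, i.e. maps landing in `Q`). -/
abbrev Collection (S : Type*) [Group S] :=
  ∀ (P : Subgroup S), Subgroup S → Set (P →* S)

namespace Collection

/-- `P` and `Q` are conjugate in the collection `C` if some morphism of `C`
restricts to an isomorphism from `P` onto `Q`. -/
def IsConj (C : Collection S) (P Q : Subgroup S) : Prop :=
  ∃ φ ∈ C P Q, MonoidHom.range φ = Q

/-- `P` is fully centralized: its centralizer has maximal order in its conjugacy class. -/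
def FullyCentralized (C : Collection S) (P : Subgroup S) : Prop :=
  ∀ Q : Subgroup S, C.IsConj P Q →
    Nat.card (Subgroup.centralizer (Q : Set S)) ≤ Nat.card (Subgroup.centralizer (P : Set S))

/-- `P` is fully normalized: its normalizer has maximal order in its conjugacy class. -/
def FullyNormalized (C : Collection S) (P : Subgroup S) : Prop :=
  ∀ Q : Subgroup S, C.IsConj P Q → Nat.card (Subgroup.normalizer (Q : Set S)) ≤ Nat.card (Subgroup.normalizer (P : Set S))

end Collection

/-- The set `Aut_S(P)` of automorphisms of `P` induced by conjugation by elements of the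
normalizer `N_S(P)`, as a set of homomorphisms `P →* S`. -/
def autSSet (P : Subgroup S) : Set (P →* S) :=
  {φ | ∃ s ∈ Subgroup.normalizer (P : Set S), φ = conjHom s P}

/-- `Aut_S(P)` is a Sylow `p`-subgroup of `Aut_C(P) = C P P`:  `Aut_S(P)` is contained
in `Aut_C(P)`, has `p`-power order, and has index prime to `p` in `Aut_C(P)`. -/
def Collection.AutSIsSylow (p : ℕ) (C : Collection S) (P : Subgroup S) : Prop :=
  autSSet P ⊆ C P P ∧ (∃ n : ℕ, Nat.card (autSSet P) = p ^ n) ∧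
    ∃ k : ℕ, ¬ p ∣ k ∧ Nat.card (C P P) = k * Nat.card (autSSet P)

/-- A collection is level-wise closed if it contains all conjugation maps induced by `S`,
the inverse of every isomorphism it contains, and all composites of composable
isomorphisms it contains. -/
def LevelwiseClosed (C : Collection S) : Prop :=
  (∀ (P Q : Subgroup S) (s : S), (∀ u ∈ P, s * u * s⁻¹ ∈ Q) → conjHom s P ∈ C P Q) ∧
  (∀ (P Q : Subgroup S), ∀ φ ∈ C P Q, MonoidHom.range φ = Q → ∀ ψ : Q →* S,
    (∀ (u : P) (hq : (φ u : S) ∈ Q), ψ ⟨φ u, hq⟩ = u) → ψ ∈ C Q P) ∧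
  (∀ (P Q R : Subgroup S) (φ : P →* S), φ ∈ C P Q → ∀ ψ : Q →* S, ψ ∈ C Q R →
    ∀ hφ : MonoidHom.range φ = Q, MonoidHom.range ψ = R →
    ψ.comp (φ.codRestrict Q (fun u => hφ ▸ show φ u ∈ φ.range from ⟨u, rfl⟩)) ∈ C P R)

end Collections

/-! ## Fusion systems -/

section Fusion

variable {S : Type*} [Group S]

/-- A fusion system on a group `S`: for each pair of subgroups `P, Q ≤ S`, a set
`Hom P Q` of injective homomorphisms `P → Q` (represented as homomorphisms `P →* S`
with image contained in `Q`), containing all conjugation maps induced by `S`, closed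
under composition, and such that every morphism restricts to an isomorphism onto its
image lying in the fusion system, whose inverse also lies in the fusion system. -/
structure FusionSystem (S : Type*) [Group S] where
  Hom : Collection S
  injective' : ∀ {P Q : Subgroup S} {φ : P →* S}, φ ∈ Hom P Q → Function.Injective φ
  mapsTo' : ∀ {P Q : Subgroup S} {φ : P →* S}, φ ∈ Hom P Q → ∀ u : P, φ u ∈ Q
  conj_mem' : ∀ (P Q : Subgroup S) (s : S), (∀ u ∈ P, s * u * s⁻¹ ∈ Q) →
    conjHom s P ∈ Hom P Q
  comp_mem' : ∀ {P Q R : Subgroup S} {φ : P →* S} {ψ : Q →* S},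
    (hφ : φ ∈ Hom P Q) → (hψ : ψ ∈ Hom Q R) →
    ψ.comp (φ.codRestrict Q (mapsTo' hφ)) ∈ Hom P R
  target_mem' : ∀ {P Q : Subgroup S} {φ : P →* S}, φ ∈ Hom P Q → φ ∈ Hom P φ.range
  inv_mem' : ∀ {P Q : Subgroup S} {φ : P →* S}, φ ∈ Hom P Q →
    ∃ ψ ∈ Hom φ.range P, ∀ u : P, ψ ⟨φ u, ⟨u, rfl⟩⟩ = u

/-- The subgroup `N_φ = {x ∈ N_S(P) | ∃ y ∈ N_S(φ(P)), ∀ u ∈ P, φ(xux⁻¹) = yφ(u)y⁻¹}`. -/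
def Nphi (P : Subgroup S) (φ : P →* S) : Subgroup S where
  carrier := {x | x ∈ Subgroup.normalizer (P : Set S) ∧ ∃ y ∈ Subgroup.normalizer (φ.range : Set S),
    ∀ (u v : S) (hu : u ∈ P) (hv : v ∈ P), v = x * u * x⁻¹ →
      φ ⟨v, hv⟩ = y * φ ⟨u, hu⟩ * y⁻¹}
  one_mem' := by
    refine ⟨(Subgroup.normalizer (P : Set S)).one_mem, 1, (Subgroup.normalizer (φ.range : Set S)).one_mem, ?_⟩
    intro u v hu hv hveq
    have h1 : (⟨v, hv⟩ : P) = ⟨u, hu⟩ := Subtype.ext (show v = u by rw [hveq]; group)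
    rw [h1]; group
  mul_mem' := by
    rintro x₁ x₂ ⟨hx₁, y₁, hy₁, h₁⟩ ⟨hx₂, y₂, hy₂, h₂⟩
    refine ⟨mul_mem hx₁ hx₂, y₁ * y₂, mul_mem hy₁ hy₂, ?_⟩
    intro u v hu hv hveq
    have hw : x₂ * u * x₂⁻¹ ∈ P := (Subgroup.mem_normalizer_iff.mp hx₂ u).mp hu
    have e1 : φ ⟨v, hv⟩ = y₁ * φ ⟨x₂ * u * x₂⁻¹, hw⟩ * y₁⁻¹ :=
      h₁ _ _ hw hv (by rw [hveq]; group)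
    have e2 : φ ⟨x₂ * u * x₂⁻¹, hw⟩ = y₂ * φ ⟨u, hu⟩ * y₂⁻¹ := h₂ _ _ hu hw rfl
    rw [e1, e2]; group
  inv_mem' := by
    rintro x ⟨hx, y, hy, h⟩
    refine ⟨Subgroup.inv_mem _ hx, y⁻¹, Subgroup.inv_mem _ hy, ?_⟩
    intro u v hu hv hveq
    have e1 : φ ⟨u, hu⟩ = y * φ ⟨v, hv⟩ * y⁻¹ :=
      h _ _ hv hu (by rw [hveq]; group)
    rw [e1]; group

namespace FusionSystem

/-- Axiom I of saturation: every fully normalized subgroup is fully centralized and its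
`S`-automorphism group is a Sylow `p`-subgroup of its full automorphism group. -/
def AxiomI (p : ℕ) (F : FusionSystem S) : Prop :=
  ∀ P : Subgroup S, F.Hom.FullyNormalized P →
    F.Hom.FullyCentralized P ∧ F.Hom.AutSIsSylow p P

/-- Axiom I restricted to the full subgroup `S` itself:
`Aut_S(S)` is a Sylow `p`-subgroup of `Aut_F(S)`. -/
def AxiomIS (p : ℕ) (F : FusionSystem S) : Prop :=
  F.Hom.AutSIsSylow p ⊤

/-- Axiom II of saturation (the extension axiom): every morphism `φ : P → S` of `F`
whose image is fully centralized extends to a morphism of `F` defined on `N_φ`. -/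
def AxiomII (F : FusionSystem S) : Prop :=
  ∀ (P : Subgroup S) (φ : P →* S), φ ∈ F.Hom P ⊤ →
    F.Hom.FullyCentralized φ.range →
    ∃ φbar ∈ F.Hom (Nphi P φ) ⊤,
      ∀ (u : S) (hu : u ∈ P) (hu' : u ∈ Nphi P φ), φbar ⟨u, hu'⟩ = φ ⟨u, hu⟩

/-- A fusion system is saturated if it satisfies Axioms I and II. -/
def Saturated (p : ℕ) (F : FusionSystem S) : Prop :=
  F.AxiomI p ∧ F.AxiomII

end FusionSystem

/-- The closure of a collection: the smallest fusion system containing it.  (The morphism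
sets of the closure are the intersections of the morphism sets over all fusion systems
containing the collection.) -/
def closureHom (C : Collection S) : Collection S :=
  fun P Q =>
    {φ | ∀ F : FusionSystem S, (∀ P' Q', C P' Q' ⊆ F.Hom P' Q') → φ ∈ F.Hom P Q}

/-- A level-wise closed collection `C` is saturated at `P ≤ S` if:
(I_P) every fully normalized `Q` conjugate to `P` in `C` is fully centralized and
`Aut_S(Q)` is a Sylow `p`-subgroup of `Aut_C(Q)`; and
(II_P) every `φ ∈ Hom_C(P,S)` with fully centralized image extends to a morphism
`N_φ → S` in the closure of `C`. -/
def SaturatedAt (p : ℕ) (C : Collection S) (P : Subgroup S) : Prop :=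
  (∀ Q : Subgroup S, C.IsConj P Q → C.FullyNormalized Q →
    C.FullyCentralized Q ∧ C.AutSIsSylow p Q) ∧
  (∀ φ ∈ C P ⊤, C.FullyCentralized (MonoidHom.range φ) →
    ∃ φbar ∈ closureHom C (Nphi P φ) ⊤,
      ∀ (u : S) (hu : u ∈ P) (hu' : u ∈ Nphi P φ), φbar ⟨u, hu'⟩ = φ ⟨u, hu⟩)

end Fusion

section Aux

open Subgroup

variable {S : Type*} [Group S]

private instance auxFinSubgroup [Finite S] : Finite (Subgroup S) :=
  Finite.of_injective (fun H => (H : Set S)) SetLike.coe_injective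

private instance auxFinHom [Finite S] (P : Subgroup S) : Finite (↥P →* S) :=
  Finite.of_injective (fun f => (f : ↥P → S)) DFunLike.coe_injective

private instance auxFinMulAut [Finite S] (P : Subgroup S) : Finite (MulAut ↥P) :=
  Finite.of_injective (fun f => (f : ↥P → ↥P)) DFunLike.coe_injective

theorem aux_conjHom_apply (s : S) (P : Subgroup S) (u : ↥P) :
    conjHom s P u = s * u * s⁻¹ := rfl

theorem aux_conjHom_one_range (P : Subgroup S) : (conjHom 1 P).range = P := by
  ext x
  constructor
  · rintro ⟨u, rfl⟩
    simpa [aux_conjHom_apply] using u.2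
  · intro hx
    exact ⟨⟨x, hx⟩, by simp [aux_conjHom_apply]⟩

namespace FusionSystem

variable (F : FusionSystem S)

theorem aux_mem_of_le_dom {P Q P' : Subgroup S} (h : P' ≤ P) {φ : ↥P →* S}
    (hφ : φ ∈ F.Hom P Q) : φ.comp (Subgroup.inclusion h) ∈ F.Hom P' Q := by
  have hc : conjHom 1 P' ∈ F.Hom P' P :=
    F.conj_mem' P' P 1 (fun u hu => by simpa using h hu)
  have h3 := F.comp_mem' hc hφ
  have he : φ.comp ((conjHom 1 P').codRestrict P (F.mapsTo' hc)) =
      φ.comp (Subgroup.inclusion h) := by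
    ext u
    simp only [MonoidHom.comp_apply]
    congr 1
    exact Subtype.ext (by simp [aux_conjHom_apply, Subgroup.inclusion])
  rwa [he] at h3

theorem aux_mem_target {P Q Q' : Subgroup S} {φ : ↥P →* S}
    (hφ : φ ∈ F.Hom P Q) (h : ∀ u : ↥P, φ u ∈ Q') : φ ∈ F.Hom P Q' := by
  have h1 : φ ∈ F.Hom P φ.range := F.target_mem' hφ
  have h2 : conjHom 1 φ.range ∈ F.Hom φ.range Q' := by
    refine F.conj_mem' _ _ 1 (fun u hu => ?_)
    obtain ⟨v, rfl⟩ := hu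
    simpa using h v
  have h3 := F.comp_mem' h1 h2
  have he : (conjHom 1 φ.range).comp (φ.codRestrict φ.range (F.mapsTo' h1)) = φ := by
    ext u
    simp [aux_conjHom_apply, MonoidHom.codRestrict]
  rwa [he] at h3

theorem aux_exists_inv {P Q : Subgroup S} {φ : ↥P →* S}
    (hφ : φ ∈ F.Hom P Q) (hr : φ.range = Q) :
    ∃ ψ ∈ F.Hom Q P, (∀ (u : ↥P) (h : φ u ∈ Q), ψ ⟨φ u, h⟩ = u) ∧
      (∀ (v : ↥Q) (h : ψ v ∈ P), φ ⟨ψ v, h⟩ = v) := by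
  subst hr
  obtain ⟨ψ, hψ, hinv⟩ := F.inv_mem' hφ
  refine ⟨ψ, hψ, fun u h => ?_, fun v h => ?_⟩
  · have : (⟨φ u, h⟩ : ↥φ.range) = ⟨φ u, ⟨u, rfl⟩⟩ := Subtype.ext rfl
    rw [this]; exact hinv u
  · obtain ⟨u, hu⟩ := v.2
    have hv : v = ⟨φ u, ⟨u, rfl⟩⟩ := Subtype.ext hu.symm
    subst hv
    have : ψ ⟨φ u, ⟨u, rfl⟩⟩ = ↑u := hinv u
    have harg : (⟨ψ ⟨φ u, ⟨u, rfl⟩⟩, h⟩ : ↥P) = u := Subtype.ext this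
    rw [harg]

end FusionSystem

end Aux
theorem FusionSystem.aux_range_le {S : Type*} [Group S] (F : FusionSystem S)
    {P Q : Subgroup S} {φ : ↥P →* S} (hφ : φ ∈ F.Hom P Q) : φ.range ≤ Q := by
  rintro _ ⟨u, rfl⟩; exact F.mapsTo' hφ u
section Aux2

open Subgroup

variable {S : Type*} [Group S]

namespace FusionSystem

variable (F : FusionSystem S)

theorem aux_isConj_refl (P : Subgroup S) : F.Hom.IsConj P P :=
  ⟨conjHom 1 P, F.conj_mem' P P 1 (fun u hu => by simpa using hu),
    aux_conjHom_one_range P⟩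

theorem aux_isConj_symm {P Q : Subgroup S} (h : F.Hom.IsConj P Q) : F.Hom.IsConj Q P := by
  obtain ⟨φ, hφ, hr⟩ := h
  obtain ⟨ψ, hψ, hinv, hinv'⟩ := F.aux_exists_inv hφ hr
  refine ⟨ψ, hψ, le_antisymm (F.aux_range_le hψ) fun x hx => ?_⟩
  exact ⟨⟨φ ⟨x, hx⟩, hr ▸ ⟨⟨x, hx⟩, rfl⟩⟩, by rw [hinv ⟨x, hx⟩]⟩

theorem aux_isConj_trans {P Q R : Subgroup S} (h1 : F.Hom.IsConj P Q)
    (h2 : F.Hom.IsConj Q R) : F.Hom.IsConj P R := by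
  obtain ⟨φ, hφ, hrφ⟩ := h1
  obtain ⟨ψ, hψ, hrψ⟩ := h2
  refine ⟨ψ.comp (φ.codRestrict Q (F.mapsTo' hφ)), F.comp_mem' hφ hψ, ?_⟩
  rw [← hrψ]
  ext x
  constructor
  · rintro ⟨u, rfl⟩
    exact ⟨_, rfl⟩
  · rintro ⟨v, rfl⟩
    have hv : (v : S) ∈ φ.range := hrφ ▸ v.2
    obtain ⟨u, hu⟩ := hv
    exact ⟨u, by simp only [MonoidHom.comp_apply]; congr 1; exact Subtype.ext hu⟩

theorem aux_card_eq_of_isConj [Finite S] {P Q : Subgroup S} (h : F.Hom.IsConj P Q) :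
    Nat.card ↥P = Nat.card ↥Q := by
  obtain ⟨φ, hφ, hr⟩ := h
  rw [← hr]
  exact Nat.card_congr (Equiv.ofBijective _
    ⟨fun a b hab => F.injective' hφ (congrArg Subtype.val hab),
      φ.rangeRestrict_surjective⟩)

end FusionSystem

end Aux2
section Aux3

open Subgroup

variable {S : Type*} [Group S]

/-- The embedding of automorphisms of `Q` into homs `Q →* S`. -/
def autj (Q : Subgroup S) (f : MulAut ↥Q) : ↥Q →* S :=
  Q.subtype.comp f.toMonoidHom

theorem autj_apply (Q : Subgroup S) (f : MulAut ↥Q) (u : ↥Q) :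
    autj Q f u = (f u : S) := rfl

theorem autj_injective (Q : Subgroup S) : Function.Injective (autj Q) := by
  intro f g h
  ext u
  exact congrArg Subtype.val (show f u = g u by simpa [autj] using DFunLike.congr_fun h u)

theorem autj_range (Q : Subgroup S) (f : MulAut ↥Q) : (autj Q f).range = Q := by
  ext x
  constructor
  · rintro ⟨u, rfl⟩; exact (f u).2
  · intro hx; exact ⟨f⁻¹ ⟨x, hx⟩, by simp [autj_apply]⟩

theorem autj_one (Q : Subgroup S) : autj Q 1 = conjHom 1 Q := by
  ext u; simp [autj_apply, aux_conjHom_apply]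

namespace FusionSystem

variable (F : FusionSystem S)

/-- `Aut_F(Q)` as a subgroup of `MulAut Q`. -/
def autFsub (Q : Subgroup S) : Subgroup (MulAut ↥Q) where
  carrier := {f | autj Q f ∈ F.Hom Q Q}
  one_mem' := by
    show autj Q 1 ∈ F.Hom Q Q
    rw [autj_one]
    exact F.conj_mem' Q Q 1 (fun u hu => by simpa using hu)
  mul_mem' := by
    intro f g hf hg
    show autj Q (f * g) ∈ F.Hom Q Q
    have h3 := F.comp_mem' (show autj Q g ∈ F.Hom Q Q from hg) (show autj Q f ∈ F.Hom Q Q from hf)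
    have he : (autj Q f).comp ((autj Q g).codRestrict Q (F.mapsTo' hg)) = autj Q (f * g) := by
      ext u
      exact congrArg _ (Subtype.ext rfl)
    rwa [he] at h3
  inv_mem' := by
    intro f hf
    show autj Q f⁻¹ ∈ F.Hom Q Q
    obtain ⟨ψ, hψ, hinv, _⟩ := F.aux_exists_inv (show autj Q f ∈ F.Hom Q Q from hf) (autj_range Q f)
    have he : ψ = autj Q f⁻¹ := by
      ext v
      have h1 : autj Q f (f⁻¹ v) ∈ Q := (f (f⁻¹ v)).2
      have h2 : (⟨autj Q f (f⁻¹ v), h1⟩ : ↥Q) = v := Subtype.ext (by simp [autj_apply])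
      calc ψ v = ψ ⟨autj Q f (f⁻¹ v), h1⟩ := by rw [h2]
        _ = ↑(f⁻¹ v) := hinv (f⁻¹ v) h1
        _ = autj Q f⁻¹ v := rfl
    rwa [he] at hψ

theorem mem_autFsub_iff (Q : Subgroup S) (f : MulAut ↥Q) :
    f ∈ F.autFsub Q ↔ autj Q f ∈ F.Hom Q Q := Iff.rfl

/-- `Aut_F(Q)` as a set of homs equals the `j`-image of `autFsub`. -/
theorem autFsub_image [Finite S] (Q : Subgroup S) :
    autj Q '' (F.autFsub Q : Set (MulAut ↥Q)) = F.Hom Q Q := by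
  ext φ
  constructor
  · rintro ⟨f, hf, rfl⟩; exact hf
  · intro hφ
    have hinj : Function.Injective (φ.codRestrict Q (F.mapsTo' hφ)) := by
      intro a b hab
      exact F.injective' hφ (congrArg Subtype.val hab)
    have hsurj : Function.Surjective (φ.codRestrict Q (F.mapsTo' hφ)) :=
      Finite.surjective_of_injective hinj
    set e := MulEquiv.ofBijective _ ⟨hinj, hsurj⟩ with he
    refine ⟨e, ?_, ?_⟩
    · show autj Q e ∈ F.Hom Q Q
      have : autj Q e = φ := by ext u; rfl
      rwa [this]
    · ext u; rfl

theorem card_autFsub [Finite S] (Q : Subgroup S) :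
    Nat.card (F.autFsub Q) = Nat.card (F.Hom Q Q) := by
  rw [← F.autFsub_image Q]
  exact Nat.card_congr (Equiv.Set.imageOfInjOn (autj Q) _ ((autj_injective Q).injOn))

end FusionSystem

/-- `Aut_S(Q)` as a subgroup of `MulAut Q`. -/
def autSsub (Q : Subgroup S) : Subgroup (MulAut ↥Q) :=
  Q.normalizerMonoidHom.range

theorem autSsub_image [Finite S] (Q : Subgroup S) :
    autj Q '' (autSsub Q : Set (MulAut ↥Q)) = autSSet Q := by
  ext φ
  constructor
  · rintro ⟨f, ⟨x, rfl⟩, rfl⟩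
    refine ⟨x, x.2, ?_⟩
    ext u
    rfl
  · rintro ⟨s, hs, rfl⟩
    refine ⟨Q.normalizerMonoidHom ⟨s, hs⟩, ⟨⟨s, hs⟩, rfl⟩, ?_⟩
    ext u
    rfl

theorem card_autSsub [Finite S] (Q : Subgroup S) :
    Nat.card (autSsub Q) = Nat.card (autSSet Q) := by
  rw [← autSsub_image]
  exact Nat.card_congr (Equiv.Set.imageOfInjOn (autj Q) _ ((autj_injective Q).injOn))

end Aux3
section Aux4

open Subgroup

theorem aux_pgroup_range {p : ℕ} {G K : Type*} [Group G] [Group K]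
    (h : IsPGroup p G) (f : G →* K) : IsPGroup p f.range := by
  rintro ⟨_, g, rfl⟩
  obtain ⟨k, hk⟩ := h g
  refine ⟨k, Subtype.ext ?_⟩
  have : (f g) ^ p ^ k = 1 := by rw [← map_pow, hk, map_one]
  simpa using this

theorem aux_pgroup_subgroupOf {p : ℕ} {G : Type*} [Group G] {H K : Subgroup G}
    (h : IsPGroup p H) : IsPGroup p (H.subgroupOf K) := by
  intro x
  obtain ⟨k, hk⟩ := h ⟨((x : ↥K) : G), x.2⟩
  refine ⟨k, ?_⟩
  have h2 := congrArg Subtype.val hk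
  simp only [SubmonoidClass.coe_pow, OneMemClass.coe_one] at h2
  exact Subtype.ext (Subtype.ext (by simpa using h2))

variable {S : Type*} [Group S]

theorem aux_autSsub_le (F : FusionSystem S) (Q : Subgroup S) :
    autSsub Q ≤ F.autFsub Q := by
  rintro _ ⟨x, rfl⟩
  show autj Q (Q.normalizerMonoidHom x) ∈ F.Hom Q Q
  have he : autj Q (Q.normalizerMonoidHom x) = conjHom (x : S) Q := by
    ext u; rfl
  rw [he]
  exact F.conj_mem' Q Q x (fun u hu => (Subgroup.mem_normalizer_iff.mp x.2 u).mp hu)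

theorem aux_autSSet_subset (F : FusionSystem S) (Q : Subgroup S) :
    autSSet Q ⊆ F.Hom Q Q := by
  rintro _ ⟨s, hs, rfl⟩
  exact F.conj_mem' Q Q s (fun u hu => (Subgroup.mem_normalizer_iff.mp hs u).mp hu)

theorem aux_pgroup_autSsub {p : ℕ} (hS : IsPGroup p S) (Q : Subgroup S) :
    IsPGroup p (autSsub Q) :=
  aux_pgroup_range (hS.to_subgroup (Subgroup.normalizer (Q : Set S))) Q.normalizerMonoidHom

theorem aux_card_autSSet_pow {p : ℕ} [Fact p.Prime] [Finite S] (hS : IsPGroup p S)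
    (Q : Subgroup S) : ∃ n : ℕ, Nat.card (autSSet Q) = p ^ n := by
  rw [← card_autSsub]
  exact IsPGroup.iff_card.mp (aux_pgroup_autSsub hS Q)

theorem aux_card_subgroupOf {G : Type*} [Group G] {H K : Subgroup G} (h : H ≤ K) :
    Nat.card (H.subgroupOf K) = Nat.card H :=
  Nat.card_congr (Subgroup.subgroupOfEquivOfLe h).toEquiv

theorem FusionSystem.aux_autSIsSylow_iff {p : ℕ} [Fact p.Prime] [Finite S]
    (F : FusionSystem S) (hS : IsPGroup p S) (Q : Subgroup S) :
    F.Hom.AutSIsSylow p Q ↔ ¬ p ∣ ((autSsub Q).subgroupOf (F.autFsub Q)).index := by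
  have hle := aux_autSsub_le F Q
  have hcardT : Nat.card ((autSsub Q).subgroupOf (F.autFsub Q)) = Nat.card (autSSet Q) := by
    rw [aux_card_subgroupOf hle, card_autSsub]
  have hmul : ((autSsub Q).subgroupOf (F.autFsub Q)).index *
      Nat.card (autSSet Q) = Nat.card (F.Hom Q Q) := by
    rw [← hcardT, Subgroup.index_mul_card, ← F.card_autFsub]
  have hTpos : 0 < Nat.card (autSSet Q) := by
    rw [← card_autSsub]
    exact Nat.card_pos
  constructor
  · rintro ⟨-, -, k, hk, hcard⟩
    have : ((autSsub Q).subgroupOf (F.autFsub Q)).index = k :=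
      Nat.eq_of_mul_eq_mul_right hTpos (by rw [hmul, hcard])
    rwa [this]
  · intro hidx
    exact ⟨aux_autSSet_subset F Q, aux_card_autSSet_pow hS Q,
      ((autSsub Q).subgroupOf (F.autFsub Q)).index, hidx, hmul.symm⟩

theorem aux_sylow_of_not_dvd_index {p : ℕ} [Fact p.Prime] {G : Type*} [Group G] [Finite G]
    {T : Subgroup G} (hT : IsPGroup p T) (hidx : ¬ p ∣ T.index) : 
    ∀ {Q : Subgroup G}, IsPGroup p Q → T ≤ Q → Q = T := by
  intro Q hQ hTQ
  have hrel : ¬ p ∣ (T.subgroupOf Q).index := by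
    intro hdvd
    exact hidx (Dvd.dvd.trans hdvd (by
      rw [← Subgroup.relIndex_mul_index hTQ]; exact Dvd.intro _ rfl))
  have hdvdcard : (T.subgroupOf Q).index ∣ Nat.card Q := Subgroup.index_dvd_card _
  obtain ⟨n, hn⟩ := IsPGroup.iff_card.mp hQ
  rw [hn] at hdvdcard
  obtain ⟨m, hm, hval⟩ := (Nat.dvd_prime_pow (Fact.out : p.Prime)).mp hdvdcard
  have hm0 : m = 0 := by
    by_contra hne
    exact hrel (hval ▸ dvd_pow_self p hne)
  have h1 : (T.subgroupOf Q).index = 1 := by rw [hval, hm0, pow_zero]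
  have := Subgroup.index_eq_one.mp h1
  exact le_antisymm ((Subgroup.subgroupOf_eq_top).mp this) hTQ

theorem aux_conj_into {p : ℕ} [Fact p.Prime] {G : Type*} [Group G] [Finite G]
    {T U : Subgroup G} (hT : IsPGroup p T) (hidx : ¬ p ∣ T.index) (hU : IsPGroup p U) :
    ∃ g : G, ∀ u ∈ U, g * u * g⁻¹ ∈ T := by
  let TS : Sylow p G := ⟨T, hT, fun hQ hle => aux_sylow_of_not_dvd_index hT hidx hQ hle⟩
  obtain ⟨A, hUA⟩ := hU.exists_le_sylow
  obtain ⟨g, hg⟩ := MulAction.exists_smul_eq G A TS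
  refine ⟨g, fun u hu => ?_⟩
  have hmem : u ∈ (A : Subgroup G) := hUA hu
  have : (g • A : Sylow p G).toSubgroup = T := congrArg Sylow.toSubgroup hg
  rw [Sylow.smul_def, Sylow.pointwise_smul_def] at this
  rw [← this]
  rw [Subgroup.mem_pointwise_smul_iff_inv_smul_mem]
  have hval : (MulAut.conj g)⁻¹ • (g * u * g⁻¹) = u := by
    simp [MulAut.smul_def]
    group
  rwa [hval]

theorem aux_exists_normalizing {p : ℕ} [Fact p.Prime] {G : Type*} [Group G] [Finite G]
    {T : Subgroup G} (hT : IsPGroup p T) (hidx : p ∣ T.index) :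
    ∃ a : G, (∃ k : ℕ, a ^ p ^ k = 1) ∧ a ∉ T ∧ ∀ t ∈ T, a * t * a⁻¹ ∈ T := by
  obtain ⟨A, hTA⟩ := hT.exists_le_sylow
  have hne : T ≠ (A : Subgroup G) := by
    rintro rfl
    exact A.not_dvd_index hidx
  have hlt : T.subgroupOf (A : Subgroup G) < ⊤ := by
    rcases lt_or_eq_of_le (le_top : T.subgroupOf (A : Subgroup G) ≤ ⊤) with h | h
    · exact h
    · exact absurd (le_antisymm (Subgroup.subgroupOf_eq_top.mp h) hTA).symm hne
  haveI : Group.IsNilpotent ↥(A : Subgroup G) := A.isPGroup'.isNilpotent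
  have hcond := normalizerCondition_of_isNilpotent (G := ↥(A : Subgroup G))
  have hlt2 := hcond _ hlt
  obtain ⟨x, hxn, hxt⟩ := SetLike.exists_of_lt hlt2
  refine ⟨(x : G), ?_, ?_, ?_⟩
  · obtain ⟨k, hk⟩ := A.isPGroup' x
    exact ⟨k, by simpa using congrArg Subtype.val hk⟩
  · intro hmem
    exact hxt (by rwa [Subgroup.mem_subgroupOf])
  · intro t ht
    have htA : (⟨t, hTA ht⟩ : ↥(A : Subgroup G)) ∈ T.subgroupOf (A : Subgroup G) := by
      rwa [Subgroup.mem_subgroupOf]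
    have := (Subgroup.mem_normalizer_iff.mp hxn _).mp htA
    rwa [Subgroup.mem_subgroupOf] at this
end Aux4
section Aux5

open Subgroup

variable {S : Type*} [Group S]

theorem aux_centralizer_le_normalizer (Q : Subgroup S) :
    Subgroup.centralizer (Q : Set S) ≤ (Subgroup.normalizer (Q : Set S)) := by
  intro z hz
  rw [Subgroup.mem_normalizer_iff]
  intro h
  constructor
  · intro hh
    have h1 : h * z = z * h := Subgroup.mem_centralizer_iff.mp hz h hh
    have h2 : z * h * z⁻¹ = h := by rw [← h1]; group
    rwa [h2]
  · intro hh
    have h1 : (z * h * z⁻¹) * z = z * (z * h * z⁻¹) :=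
      Subgroup.mem_centralizer_iff.mp hz _ hh
    have h2 : z * h = z * (z * h * z⁻¹) := by
      calc z * h = (z * h * z⁻¹) * z := by group
      _ = z * (z * h * z⁻¹) := h1
    have h3 : h = z * h * z⁻¹ := mul_left_cancel h2
    rwa [← h3] at hh

theorem aux_mem_Nphi_iff (P : Subgroup S) (φ : ↥P →* S) (x : S) :
    x ∈ Nphi P φ ↔ x ∈ (Subgroup.normalizer (P : Set S)) ∧ ∃ y ∈ (Subgroup.normalizer (φ.range : Set S)),
      ∀ (u v : S) (hu : u ∈ P) (hv : v ∈ P), v = x * u * x⁻¹ →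
        φ ⟨v, hv⟩ = y * φ ⟨u, hu⟩ * y⁻¹ := Iff.rfl

theorem aux_le_nphi_self (P : Subgroup S) (φ : ↥P →* S) : P ≤ Nphi P φ := by
  intro x₀ hx₀
  rw [aux_mem_Nphi_iff]
  refine ⟨le_normalizer hx₀, φ ⟨x₀, hx₀⟩, le_normalizer ⟨⟨x₀, hx₀⟩, rfl⟩, ?_⟩
  intro u v hu hv hveq
  have : (⟨v, hv⟩ : ↥P) = ⟨x₀, hx₀⟩ * ⟨u, hu⟩ * (⟨x₀, hx₀⟩ : ↥P)⁻¹ := Subtype.ext hveq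
  rw [this, map_mul, map_mul, map_inv]

end Aux5
section Aux6

open Subgroup

variable {S : Type*} [Group S]

theorem FusionSystem.aux_key [Finite S] (F : FusionSystem S) (hII : F.AxiomII)
    {P : Subgroup S} {φ : ↥P →* S} (hφ : φ ∈ F.Hom P ⊤)
    (hfc : Collection.FullyCentralized F.Hom φ.range)
    (hN : (Subgroup.normalizer (P : Set S)) ≤ Nphi P φ) :
    ∃ g : ↥(Subgroup.normalizer (P : Set S)) →* S, g ∈ F.Hom (Subgroup.normalizer (P : Set S)) ⊤ ∧ Function.Injective g ∧
      (∀ x : ↥(Subgroup.normalizer (P : Set S)), g x ∈ (Subgroup.normalizer (φ.range : Set S))) ∧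
      (∀ (u : S) (hu : u ∈ P) (hn : u ∈ (Subgroup.normalizer (P : Set S))), g ⟨u, hn⟩ = φ ⟨u, hu⟩) := by
  obtain ⟨φbar, hbar, hext⟩ := hII P φ hφ hfc
  refine ⟨φbar.comp (Subgroup.inclusion hN), F.aux_mem_of_le_dom hN hbar,
    (F.injective' hbar).comp (Subgroup.inclusion_injective hN), ?_, ?_⟩
  swap
  · intro u hu hn
    exact hext u hu (hN hn)
  intro x
  have hgext : ∀ (u : S) (hu : u ∈ P) (hn : u ∈ (Subgroup.normalizer (P : Set S))),
      φbar.comp (Subgroup.inclusion hN) ⟨u, hn⟩ = φ ⟨u, hu⟩ := fun u hu hn => hext u hu (hN hn)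
  set g := φbar.comp (Subgroup.inclusion hN) with hg
  rw [Subgroup.mem_normalizer_iff]
  intro w
  constructor
  · rintro ⟨u, rfl⟩
    have hmemP : (x : S) * u * (x : S)⁻¹ ∈ P := (mem_normalizer_iff.mp x.2 u).mp u.2
    set xu : ↥(Subgroup.normalizer (P : Set S)) := x * ⟨(u : S), le_normalizer u.2⟩ * x⁻¹ with hxu
    have h1 : g xu = φ ⟨(x : S) * u * (x : S)⁻¹, hmemP⟩ := hgext _ hmemP _
    have h2 : g xu = g x * φ u * (g x)⁻¹ := by
      rw [hxu, map_mul, map_mul, map_inv]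
      congr 1
      congr 1
      rw [hgext (u : S) u.2 (le_normalizer u.2)]
    rw [← h2, h1]
    exact ⟨_, rfl⟩
  · rintro hw
    obtain ⟨u, hu⟩ := hw
    have hmemP : (x : S)⁻¹ * u * (x : S) ∈ P := by
      have hxinv : (x : S)⁻¹ ∈ (Subgroup.normalizer (P : Set S)) := Subgroup.inv_mem _ x.2
      have := (mem_normalizer_iff.mp hxinv u).mp u.2
      simpa using this
    set xu : ↥(Subgroup.normalizer (P : Set S)) := x⁻¹ * ⟨(u : S), le_normalizer u.2⟩ * x with hxu
    have h1 : g xu = φ ⟨(x : S)⁻¹ * u * (x : S), hmemP⟩ := by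
      have := hgext ((x : S)⁻¹ * u * (x : S)) hmemP xu.2
      convert this using 2
      exact Subtype.ext rfl
    have h2 : g xu = (g x)⁻¹ * φ u * (g x) := by
      rw [hxu, map_mul, map_mul, map_inv]
      congr 2
      rw [hgext (u : S) u.2 (le_normalizer u.2)]
    have h3 : w = (g x)⁻¹ * (g x * w * (g x)⁻¹) * (g x) := by group
    rw [h3, ← hu, ← h2, h1]
    exact ⟨_, rfl⟩

end Aux6
section Aux7

open Subgroup

variable {S : Type*} [Group S]

theorem aux_card_lt_of_lt [Finite S] {H K : Subgroup S} (h : H < K) :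
    Nat.card H < Nat.card K := by
  have h1 : ((H : Set S)).ncard < ((K : Set S)).ncard :=
    Set.ncard_lt_ncard (SetLike.coe_ssubset_coe.mpr h) (Set.toFinite _)
  rwa [← Nat.card_coe_set_eq, ← Nat.card_coe_set_eq] at h1

theorem aux_lt_normalizer {p : ℕ} [Fact p.Prime] [Finite S] (hS : IsPGroup p S)
    {R : Subgroup S} (h : R ≠ ⊤) : R < (Subgroup.normalizer (R : Set S)) := by
  haveI : Group.IsNilpotent S := hS.isNilpotent
  exact normalizerCondition_of_isNilpotent R (lt_top_iff_ne_top.mpr h)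

/-- The equivalence of `R` with the range of an injective hom. -/
noncomputable def aux_rangeEquiv {R : Subgroup S} (ρ : ↥R →* S)
    (hinj : Function.Injective ρ) : ↥R ≃* ↥ρ.range :=
  MulEquiv.ofBijective ρ.rangeRestrict
    ⟨fun a b hab => hinj (congrArg Subtype.val hab), ρ.rangeRestrict_surjective⟩

theorem aux_rangeEquiv_apply {R : Subgroup S} (ρ : ↥R →* S)
    (hinj : Function.Injective ρ) (u : ↥R) :
    ((aux_rangeEquiv ρ hinj) u : S) = ρ u := rfl

theorem aux_rangeEquiv_symm {R : Subgroup S} (ρ : ↥R →* S)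
    (hinj : Function.Injective ρ) (v : ↥ρ.range) :
    ρ ((aux_rangeEquiv ρ hinj).symm v) = (v : S) :=
  congrArg Subtype.val ((aux_rangeEquiv ρ hinj).apply_symm_apply v)

theorem aux_pgroup_zpowers {p : ℕ} {G : Type*} [Group G] {b : G} {f : ℕ}
    (hb : b ^ p ^ f = 1) : IsPGroup p (Subgroup.zpowers b) := by
  rintro ⟨x, i, rfl⟩
  refine ⟨f, Subtype.ext ?_⟩
  have : (b ^ (i : ℤ)) ^ (p ^ f : ℕ) = ((b ^ (p ^ f : ℕ)) ^ (i : ℤ) : G) := by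
    rw [← zpow_natCast, ← zpow_mul, mul_comm, zpow_mul, zpow_natCast]
  simpa [this, hb] using rfl

theorem FusionSystem.aux_congr_mem [Finite S] (F : FusionSystem S) {P : Subgroup S}
    {φ : ↥P →* S} (hφ : φ ∈ F.Hom P φ.range)
    {f : MulAut ↥P} (hf : f ∈ F.autFsub P) :
    (MulAut.congr (aux_rangeEquiv φ (F.injective' hφ))) f ∈ F.autFsub φ.range := by
  set e := aux_rangeEquiv φ (F.injective' hφ) with he
  obtain ⟨ψ, hψ, hinv, hinv'⟩ := F.aux_exists_inv hφ rfl
  have hc1 := F.comp_mem' hψ (show autj P f ∈ F.Hom P P from hf)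
  have hc2 := F.comp_mem' hc1 hφ
  have heq : φ.comp (((autj P f).comp (ψ.codRestrict P (F.mapsTo' hψ))).codRestrict P
      (F.mapsTo' hc1)) = autj φ.range (MulAut.congr e f) := by
    ext v
    have hsymm : (⟨ψ v, F.mapsTo' hψ v⟩ : ↥P) = e.symm v := by
      apply F.injective' hφ
      rw [hinv' v (F.mapsTo' hψ v), he, aux_rangeEquiv_symm]
    show φ (f ⟨ψ v, F.mapsTo' hψ v⟩) = (((MulAut.congr e) f) v : S)
    rw [hsymm]
    exact (aux_rangeEquiv_apply φ (F.injective' hφ) (f (e.symm v))).symm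
  show autj φ.range (MulAut.congr e f) ∈ F.Hom φ.range φ.range
  rwa [heq] at hc2

theorem aux_transport_autS {R : Subgroup S} (ρ : ↥R →* S)
    (hinj : Function.Injective ρ) (f : MulAut ↥R) (y : S)
    (hkey : ∀ r : ↥R, ρ (f r) = y * ρ r * y⁻¹) :
    (MulAut.congr (aux_rangeEquiv ρ hinj)) f ∈ autSsub ρ.range := by
  set e := aux_rangeEquiv ρ hinj with he
  have hkeyinv : ∀ r : ↥R, ρ (f⁻¹ r) = y⁻¹ * ρ r * y := by
    intro r
    have h1 := hkey (f⁻¹ r)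
    have h2 : f (f⁻¹ r) = r := by
      show (f * f⁻¹) r = r
      rw [mul_inv_cancel]
      rfl
    rw [h2] at h1
    rw [h1]
    group
  have hy : y ∈ (Subgroup.normalizer (ρ.range : Set S)) := by
    rw [Subgroup.mem_normalizer_iff]
    intro h
    constructor
    · rintro ⟨r, rfl⟩
      exact ⟨f r, hkey r⟩
    · rintro ⟨r, hr⟩
      have hh : h = y⁻¹ * ρ r * y := by rw [hr]; group
      rw [hh, ← hkeyinv r]
      exact ⟨_, rfl⟩
  refine ⟨⟨y, hy⟩, ?_⟩
  ext v
  show y * (v : S) * y⁻¹ = ((MulAut.congr e f) v : S)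
  have h3 : (MulAut.congr e f) v = e (f (e.symm v)) := rfl
  rw [h3]
  have h4 := aux_rangeEquiv_apply ρ hinj (f (e.symm v))
  rw [← he] at h4
  rw [h4, hkey, he, aux_rangeEquiv_symm]

end Aux7
section Aux8

open Subgroup

variable {S : Type*} [Group S]

theorem aux_card_le [Finite S] (P : Subgroup S) : Nat.card P ≤ Nat.card S :=
  Nat.card_le_card_of_injective Subtype.val Subtype.val_injective

theorem FusionSystem.aux_claimC_top {p : ℕ} [Finite S] (F : FusionSystem S)
    (hIS : F.AxiomIS p) {P : Subgroup S} (hcard : Nat.card P = Nat.card S) :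
    ∃ R : Subgroup S, F.Hom.IsConj P R ∧ Collection.FullyCentralized F.Hom R ∧
      F.Hom.AutSIsSylow p R := by
  have hPtop : P = ⊤ := Subgroup.eq_top_of_card_eq P hcard
  subst hPtop
  refine ⟨⊤, F.aux_isConj_refl ⊤, ?_, hIS⟩
  intro Q hconj
  have hQcard : Nat.card Q = Nat.card S := by
    rw [← F.aux_card_eq_of_isConj hconj]; exact hcard
  rw [Subgroup.eq_top_of_card_eq Q hQcard]

theorem FusionSystem.aux_claimC {p : ℕ} [Fact p.Prime] [Finite S]
    (F : FusionSystem S) (hS : IsPGroup p S) (hIS : F.AxiomIS p) (hII : F.AxiomII) :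
    ∀ (k : ℕ) (P : Subgroup S), Nat.card S ≤ Nat.card P + k →
      ∃ R : Subgroup S, F.Hom.IsConj P R ∧ Collection.FullyCentralized F.Hom R ∧
        F.Hom.AutSIsSylow p R := by
  intro k
  induction k with
  | zero =>
    intro P hcard
    exact F.aux_claimC_top hIS (le_antisymm (aux_card_le P) (by simpa using hcard))
  | succ k ih =>
    intro P hcard
    by_cases htop : Nat.card P = Nat.card S
    · exact F.aux_claimC_top hIS htop
    have hPlt : Nat.card P < Nat.card S := lt_of_le_of_ne (aux_card_le P) htop
    classical
    -- choose R0 maximizing the centralizer cardinality in the class of P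
    haveI hne : Nonempty {Q : Subgroup S // F.Hom.IsConj P Q} := ⟨⟨P, F.aux_isConj_refl P⟩⟩
    obtain ⟨⟨R0, hR0⟩, hmax0⟩ := Finite.exists_max
      (fun Q : {Q : Subgroup S // F.Hom.IsConj P Q} =>
        Nat.card (Subgroup.centralizer ((Q : Subgroup S) : Set S)))
    set cmax := Nat.card (Subgroup.centralizer ((R0 : Subgroup S) : Set S)) with hcmax
    -- choose R among those with maximal centralizer, maximizing |Aut_S|
    haveI hne2 : Nonempty {Q : Subgroup S // F.Hom.IsConj P Q ∧
        Nat.card (Subgroup.centralizer ((Q : Subgroup S) : Set S)) = cmax} := ⟨⟨R0, hR0, rfl⟩⟩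
    obtain ⟨⟨R, hRconj, hRc⟩, hmaxA⟩ := Finite.exists_max
      (fun Q : {Q : Subgroup S // F.Hom.IsConj P Q ∧
          Nat.card (Subgroup.centralizer ((Q : Subgroup S) : Set S)) = cmax} =>
        Nat.card (autSSet (Q : Subgroup S)))
    have hFCR : Collection.FullyCentralized F.Hom R := by
      intro Q hQ
      have hPQ : F.Hom.IsConj P Q := F.aux_isConj_trans hRconj hQ
      have := hmax0 ⟨Q, hPQ⟩
      simpa [hRc] using this
    refine ⟨R, hRconj, hFCR, ?_⟩
    by_contra hnot
    -- p divides the index of Aut_S(R) in Aut_F(R)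
    have hidx : p ∣ ((autSsub R).subgroupOf (F.autFsub R)).index := by
      by_contra hnd
      exact hnot ((F.aux_autSIsSylow_iff hS R).mpr hnd)
    -- extract a p-element normalizing Aut_S(R)
    obtain ⟨a, ⟨kα, hapow⟩, haT, hanorm⟩ := aux_exists_normalizing
      (aux_pgroup_subgroupOf (aux_pgroup_autSsub hS R)) hidx
    set α : MulAut ↥R := (a : MulAut ↥R) with hαdef
    have hαF : α ∈ F.autFsub R := a.2
    have hαT : α ∉ autSsub R := fun hmem => haT (by rwa [Subgroup.mem_subgroupOf])
    have hαnorm : ∀ t ∈ autSsub R, α * t * α⁻¹ ∈ autSsub R := by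
      intro t ht
      have h1 : (⟨t, aux_autSsub_le F R ht⟩ : ↥(F.autFsub R)) ∈
          (autSsub R).subgroupOf (F.autFsub R) := by rwa [Subgroup.mem_subgroupOf]
      have h2 := hanorm _ h1
      rwa [Subgroup.mem_subgroupOf] at h2
    have hαpow : α ^ (p ^ kα) = 1 := by
      have h3 := congrArg Subtype.val hapow
      simpa using h3
    have hφRtop : autj R α ∈ F.Hom R ⊤ :=
      F.aux_mem_target hαF (fun u => Subgroup.mem_top _)
    have hfcφ : Collection.FullyCentralized F.Hom (autj R α).range := by
      rw [autj_range]; exact hFCR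
    have hNle : (Subgroup.normalizer (R : Set S)) ≤ Nphi R (autj R α) := by
      intro x hx
      rw [aux_mem_Nphi_iff]
      refine ⟨hx, ?_⟩
      have hcx : R.normalizerMonoidHom ⟨x, hx⟩ ∈ autSsub R := ⟨⟨x, hx⟩, rfl⟩
      obtain ⟨y, hy⟩ := hαnorm _ hcx
      refine ⟨(y : S), by rw [autj_range]; exact y.2, ?_⟩
      intro u v hu hv hveq
      have h3 : (⟨v, hv⟩ : ↥R) = R.normalizerMonoidHom ⟨x, hx⟩ ⟨u, hu⟩ := Subtype.ext hveq
      have h4 : (α * R.normalizerMonoidHom ⟨x, hx⟩ * α⁻¹) (α ⟨u, hu⟩)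
          = α (R.normalizerMonoidHom ⟨x, hx⟩ ⟨u, hu⟩) := by
        simp [MulAut.mul_apply, MulAut.inv_def]
      show (α ⟨v, hv⟩ : S) = (y : S) * (α ⟨u, hu⟩ : S) * (y : S)⁻¹
      rw [h3, ← h4, ← hy]
      rfl
    obtain ⟨g, hgF, hginj, hgnorm, hgext⟩ := F.aux_key hII hφRtop hfcφ hNle
    have hgN : ∀ x : ↥(Subgroup.normalizer (R : Set S)), g x ∈ (Subgroup.normalizer (R : Set S)) := by
      intro x; have h5 := hgnorm x; rwa [autj_range] at h5
    set m : ↥(Subgroup.normalizer (R : Set S)) →* ↥(Subgroup.normalizer (R : Set S)) := g.codRestrict (Subgroup.normalizer (R : Set S)) hgN with hmdef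
    have hminj : Function.Injective m := fun u1 u2 h12 => hginj (show g u1 = g u2 from congrArg Subtype.val h12)
    have hmbij := Finite.injective_iff_bijective.mp hminj
    set b₀ : MulAut ↥(Subgroup.normalizer (R : Set S)) := MulEquiv.ofBijective m hmbij with hb₀def
    have hjb₀ : autj (Subgroup.normalizer (R : Set S)) b₀ = g := by ext u; rfl
    have hb₀F : b₀ ∈ F.autFsub (Subgroup.normalizer (R : Set S)) := by
      show autj (Subgroup.normalizer (R : Set S)) b₀ ∈ F.Hom (Subgroup.normalizer (R : Set S)) (Subgroup.normalizer (R : Set S))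
      rw [hjb₀]
      exact F.aux_mem_target hgF (fun u => hgN u)
    have hb₀ext : ∀ (u : S) (hu : u ∈ R) (hn : u ∈ (Subgroup.normalizer (R : Set S))),
        ((b₀ ⟨u, hn⟩ : ↥(Subgroup.normalizer (R : Set S))) : S) = ((α ⟨u, hu⟩ : ↥R) : S) := by
      intro u hu hn
      show g ⟨u, hn⟩ = _
      rw [hgext u hu hn]
      rfl
    have hextpow : ∀ (n : ℕ) (u : S) (hu : u ∈ R) (hn : u ∈ (Subgroup.normalizer (R : Set S))),
        (((b₀ ^ n) ⟨u, hn⟩ : ↥(Subgroup.normalizer (R : Set S))) : S) = (((α ^ n) ⟨u, hu⟩ : ↥R) : S) := by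
      intro n
      induction n with
      | zero => intro u hu hn; rfl
      | succ n ihn =>
        intro u hu hn
        have h1 : ((α ^ n) ⟨u, hu⟩ : S) ∈ R := ((α ^ n) ⟨u, hu⟩).2
        have h2 : (b₀ ^ n) ⟨u, hn⟩ = ⟨((α ^ n) ⟨u, hu⟩ : S), le_normalizer h1⟩ :=
          Subtype.ext (ihn u hu hn)
        have h3 : (b₀ ^ (n + 1)) ⟨u, hn⟩ = b₀ ((b₀ ^ n) ⟨u, hn⟩) := by
          rw [pow_succ']
          rfl
        have h5 : (α ^ (n + 1)) ⟨u, hu⟩ = α ((α ^ n) ⟨u, hu⟩) := by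
          rw [pow_succ']
          rfl
        rw [h3, h2, hb₀ext _ h1 (le_normalizer h1), h5]
    set n₀ := orderOf b₀ with hn₀def
    have hn₀pos : 0 < n₀ := orderOf_pos b₀
    set fexp := n₀.factorization p with hfexpdef
    set m' := ordCompl[p] n₀ with hm'def
    have hcop : Nat.Coprime p m' := Nat.coprime_ordCompl (Fact.out : p.Prime) hn₀pos.ne'
    set E := p ^ (kα + 1) with hEdef
    have hE1 : 1 < E := Nat.one_lt_pow (Nat.succ_ne_zero kα) (Fact.out : p.Prime).one_lt
    have hαE : α ^ E = 1 := by
      rw [hEdef, pow_succ, pow_mul, hαpow, one_pow]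
    have hcopE : Nat.Coprime m' E := (Nat.coprime_comm.mp hcop).pow_right _
    obtain ⟨c, -, hc⟩ := Nat.exists_mul_mod_eq_one_of_coprime hcopE hE1
    set b := b₀ ^ (m' * c) with hbdef
    have hbF : b ∈ F.autFsub (Subgroup.normalizer (R : Set S)) := pow_mem hb₀F _
    have hpm : p ^ fexp * m' = n₀ := Nat.ordProj_mul_ordCompl_eq_self n₀ p
    have hbpow : b ^ (p ^ fexp) = 1 := by
      rw [hbdef, ← pow_mul]
      have h6 : m' * c * p ^ fexp = n₀ * c := by rw [← hpm]; ring
      rw [h6, pow_mul, pow_orderOf_eq_one, one_pow]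
    have hαmc : α ^ (m' * c) = α := by
      have hdm := Nat.div_add_mod (m' * c) E
      rw [hc] at hdm
      calc α ^ (m' * c) = α ^ (E * (m' * c / E) + 1) := by rw [hdm]
        _ = (α ^ E) ^ (m' * c / E) * α := by rw [pow_add, pow_mul, pow_one]
        _ = α := by rw [hαE, one_pow, one_mul]
    have hbext : ∀ (u : S) (hu : u ∈ R) (hn : u ∈ (Subgroup.normalizer (R : Set S))),
        ((b ⟨u, hn⟩ : ↥(Subgroup.normalizer (R : Set S))) : S) = ((α ⟨u, hu⟩ : ↥R) : S) := by
      intro u hu hn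
      rw [hbdef, hextpow (m' * c) u hu hn, hαmc]
    -- apply the induction hypothesis to (Subgroup.normalizer (R : Set S))
    have hRcard : Nat.card R = Nat.card P := (F.aux_card_eq_of_isConj hRconj).symm
    have hRne : R ≠ ⊤ := fun h => htop (by rw [← hRcard, h, Subgroup.card_top])
    have hRltN : R < (Subgroup.normalizer (R : Set S)) := aux_lt_normalizer hS hRne
    have hNcard : Nat.card P < Nat.card (Subgroup.normalizer (R : Set S)) := hRcard ▸ aux_card_lt_of_lt hRltN
    obtain ⟨M, hMconj, -, hMFA⟩ := ih (Subgroup.normalizer (R : Set S)) (by omega)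
    obtain ⟨ψN, hψN, hrN⟩ := hMconj
    subst hrN
    set e : ↥(Subgroup.normalizer (R : Set S)) ≃* ↥ψN.range := aux_rangeEquiv ψN (F.injective' hψN) with hedef
    set b' : MulAut ↥ψN.range := (MulAut.congr e) b with hb'def
    have hb'F : b' ∈ F.autFsub ψN.range := F.aux_congr_mem (F.target_mem' hψN) hbF
    have hb'pow : b' ^ (p ^ fexp) = 1 := by
      rw [hb'def, ← map_pow, hbpow, map_one]
    have hidxM : ¬ p ∣ ((autSsub ψN.range).subgroupOf (F.autFsub ψN.range)).index :=
      (F.aux_autSIsSylow_iff hS ψN.range).mp hMFA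
    obtain ⟨gM, hgM⟩ := aux_conj_into (G := ↥(F.autFsub ψN.range))
      (aux_pgroup_subgroupOf (aux_pgroup_autSsub hS ψN.range)) hidxM
      (aux_pgroup_subgroupOf (aux_pgroup_zpowers hb'pow))
    set χ : MulAut ↥ψN.range := (gM : MulAut ↥ψN.range) with hχdef
    have hχF : χ ∈ F.autFsub ψN.range := gM.2
    have hb''T : χ * b' * χ⁻¹ ∈ autSsub ψN.range := by
      have h1 : (⟨b', hb'F⟩ : ↥(F.autFsub ψN.range)) ∈
          (Subgroup.zpowers b').subgroupOf (F.autFsub ψN.range) := by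
        rw [Subgroup.mem_subgroupOf]; exact Subgroup.mem_zpowers b'
      have h2 := hgM _ h1
      rwa [Subgroup.mem_subgroupOf] at h2
    obtain ⟨y₀, hy₀⟩ := hb''T
    set θ : ↥(Subgroup.normalizer (R : Set S)) →* S := (autj ψN.range χ).comp (ψN.codRestrict ψN.range
      (F.mapsTo' (F.target_mem' hψN))) with hθdef
    have hθF : θ ∈ F.Hom (Subgroup.normalizer (R : Set S)) ψN.range := F.comp_mem' (F.target_mem' hψN) hχF
    have hθinj : Function.Injective θ := F.injective' hθF
    have hθval : ∀ u : ↥(Subgroup.normalizer (R : Set S)), θ u = ((χ (e u) : ↥ψN.range) : S) := fun u => rfl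
    have hθb : ∀ u : ↥(Subgroup.normalizer (R : Set S)), θ (b u) = (y₀ : S) * θ u * (y₀ : S)⁻¹ := by
      intro u
      have h1 : e (b u) = b' (e u) := by
        rw [hb'def]
        show e (b u) = e (b (e.symm (e u)))
        rw [MulEquiv.symm_apply_apply]
      have h2 : χ (b' (e u)) = (χ * b' * χ⁻¹) (χ (e u)) := by
        simp [MulAut.mul_apply, MulAut.inv_def]
      calc θ (b u) = ((χ (e (b u)) : ↥ψN.range) : S) := hθval _
        _ = (((χ * b' * χ⁻¹) (χ (e u)) : ↥ψN.range) : S) := by rw [h1, h2]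
        _ = ((ψN.range.normalizerMonoidHom y₀ (χ (e u)) : ↥ψN.range) : S) := by rw [hy₀]
        _ = (y₀ : S) * θ u * (y₀ : S)⁻¹ := by rw [hθval u]; rfl
    set ρ : ↥R →* S := θ.comp (Subgroup.inclusion (le_normalizer : R ≤ (Subgroup.normalizer (R : Set S)))) with hρdef
    have hρF : ρ ∈ F.Hom R ψN.range := F.aux_mem_of_le_dom le_normalizer hθF
    have hρinj : Function.Injective ρ :=
      hθinj.comp (Subgroup.inclusion_injective le_normalizer)
    have hconjRR'' : F.Hom.IsConj R ρ.range := ⟨ρ, F.target_mem' hρF, rfl⟩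
    have hconjPR'' : F.Hom.IsConj P ρ.range := F.aux_isConj_trans hRconj hconjRR''
    -- centralizer comparison
    have hsub : ∀ z : ↥(Subgroup.centralizer (R : Set S)), (z : S) ∈ (Subgroup.normalizer (R : Set S)) :=
      fun z => aux_centralizer_le_normalizer R z.2
    have hmemC : ∀ z : ↥(Subgroup.centralizer (R : Set S)),
        θ ⟨(z : S), hsub z⟩ ∈ Subgroup.centralizer ((ρ.range : Subgroup S) : Set S) := by
      intro z
      rw [Subgroup.mem_centralizer_iff]
      rintro _ ⟨r, rfl⟩
      have hcomm : (Subgroup.inclusion (le_normalizer : R ≤ (Subgroup.normalizer (R : Set S))) r) * ⟨(z : S), hsub z⟩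
          = (⟨(z : S), hsub z⟩ : ↥(Subgroup.normalizer (R : Set S))) * (Subgroup.inclusion (le_normalizer : R ≤ (Subgroup.normalizer (R : Set S))) r) := by
        apply Subtype.ext
        exact Subgroup.mem_centralizer_iff.mp z.2 (r : S) r.2
      have h7 := congrArg θ hcomm
      simpa [map_mul, hρdef] using h7
    have hCinj : Nat.card (Subgroup.centralizer (R : Set S)) ≤
        Nat.card (Subgroup.centralizer ((ρ.range : Subgroup S) : Set S)) := by
      refine Nat.card_le_card_of_injective (fun z => ⟨θ ⟨(z : S), hsub z⟩, hmemC z⟩) ?_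
      intro z1 z2 h12
      have h13 : θ ⟨(z1 : S), hsub z1⟩ = θ ⟨(z2 : S), hsub z2⟩ := by
        have h15 := congrArg Subtype.val h12
        simpa using h15
      have h14 : (⟨(z1 : S), hsub z1⟩ : ↥(Subgroup.normalizer (R : Set S))) = ⟨(z2 : S), hsub z2⟩ := hθinj h13
      have h16 : ((⟨(z1 : S), hsub z1⟩ : ↥(Subgroup.normalizer (R : Set S))) : S)
          = ((⟨(z2 : S), hsub z2⟩ : ↥(Subgroup.normalizer (R : Set S))) : S) := congrArg Subtype.val h14
      exact Subtype.ext h16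
    have hcR'' : Nat.card (Subgroup.centralizer ((ρ.range : Subgroup S) : Set S)) = cmax := by
      apply le_antisymm
      · simpa using hmax0 ⟨ρ.range, hconjPR''⟩
      · rw [← hRc]; exact hCinj
    have hARR : Nat.card (autSSet (ρ.range : Subgroup S)) ≤ Nat.card (autSSet R) := by
      simpa using hmaxA ⟨ρ.range, hconjPR'', hcR''⟩
    -- transport the automorphisms
    have hclaim1 : ∀ fa ∈ autSsub R,
        (MulAut.congr (aux_rangeEquiv ρ hρinj)) fa ∈ autSsub ρ.range := by
      rintro _ ⟨xN, rfl⟩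
      refine aux_transport_autS ρ hρinj _ (θ xN) ?_
      intro r
      have h1 : Subgroup.inclusion (le_normalizer : R ≤ (Subgroup.normalizer (R : Set S))) (R.normalizerMonoidHom xN r)
          = xN * Subgroup.inclusion (le_normalizer : R ≤ (Subgroup.normalizer (R : Set S))) r * xN⁻¹ := by
        apply Subtype.ext; rfl
      calc ρ (R.normalizerMonoidHom xN r)
          = θ (xN * Subgroup.inclusion (le_normalizer : R ≤ (Subgroup.normalizer (R : Set S))) r * xN⁻¹) := by
            rw [show ρ (R.normalizerMonoidHom xN r)
              = θ (Subgroup.inclusion (le_normalizer : R ≤ (Subgroup.normalizer (R : Set S))) (R.normalizerMonoidHom xN r))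
              from rfl, h1]
        _ = θ xN * ρ r * (θ xN)⁻¹ := by rw [map_mul, map_mul, map_inv]; rfl
    have hclaim2 : (MulAut.congr (aux_rangeEquiv ρ hρinj)) α ∈ autSsub ρ.range := by
      refine aux_transport_autS ρ hρinj α ((y₀ : S)) ?_
      intro r
      have h1 : Subgroup.inclusion (le_normalizer : R ≤ (Subgroup.normalizer (R : Set S))) (α r)
          = b (Subgroup.inclusion (le_normalizer : R ≤ (Subgroup.normalizer (R : Set S))) r) := by
        apply Subtype.ext
        exact (hbext (r : S) r.2 (le_normalizer r.2)).symm
      calc ρ (α r) = θ (b (Subgroup.inclusion (le_normalizer : R ≤ (Subgroup.normalizer (R : Set S))) r)) := by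
            rw [show ρ (α r)
              = θ (Subgroup.inclusion (le_normalizer : R ≤ (Subgroup.normalizer (R : Set S))) (α r)) from rfl, h1]
        _ = (y₀ : S) * ρ r * (y₀ : S)⁻¹ := hθb _
    have hinsert : ((MulAut.congr (aux_rangeEquiv ρ hρinj)) ''
        (insert α (autSsub R : Set (MulAut ↥R)))) ⊆
          (autSsub ρ.range : Set (MulAut ↥ρ.range)) := by
      rintro _ ⟨fa, hfa, rfl⟩
      rcases Set.mem_insert_iff.mp hfa with h | h
      · rw [h]; exact hclaim2
      · exact hclaim1 _ h
    have hcount : Nat.card (autSSet R) + 1 ≤ Nat.card (autSSet (ρ.range : Subgroup S)) := by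
      rw [← card_autSsub, ← card_autSsub]
      have h1 : (insert α (autSsub R : Set (MulAut ↥R))).ncard =
          (autSsub R : Set (MulAut ↥R)).ncard + 1 :=
        Set.ncard_insert_of_notMem hαT (Set.toFinite _)
      have h2 : ((MulAut.congr (aux_rangeEquiv ρ hρinj)) ''
          (insert α (autSsub R : Set (MulAut ↥R)))).ncard =
          (insert α (autSsub R : Set (MulAut ↥R))).ncard :=
        Set.ncard_image_of_injective _ (MulEquiv.injective _)
      have h3 := Set.ncard_le_ncard hinsert (Set.toFinite _)
      have h4 : Nat.card (autSsub R) = (autSsub R : Set (MulAut ↥R)).ncard :=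
        Nat.card_coe_set_eq _
      have h5 : Nat.card (autSsub ρ.range) =
          (autSsub ρ.range : Set (MulAut ↥ρ.range)).ncard :=
        Nat.card_coe_set_eq _
      omega
    omega

end Aux8


/-- Let `F` be a fusion system on a finite `p`-group `S` satisfying
Axioms I_S and II.  Then every fully `F`-normalized subgroup of `S` is fully
`F`-centralized. -/
theorem fullyNormalized_implies_fullyCentralized
    (p : ℕ) (hp : p.Prime) (S : Type*) [Group S] [Finite S] (hS : IsPGroup p S)
    (F : FusionSystem S) (hIS : F.AxiomIS p) (hII : F.AxiomII) :
    ∀ P : Subgroup S, F.Hom.FullyNormalized P → F.Hom.FullyCentralized P := by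
  haveI : Fact p.Prime := ⟨hp⟩
  intro P hfn
  obtain ⟨R, hRconj, hFCR, hFAR⟩ := F.aux_claimC hS hIS hII (Nat.card S) P
    (Nat.le_add_left _ _)
  obtain ⟨ψ0, hψ0, hr0⟩ := hRconj
  subst hr0
  set e0 : ↥P ≃* ↥ψ0.range := aux_rangeEquiv ψ0 (F.injective' hψ0) with he0
  set μ : ↥(Subgroup.normalizer (P : Set S)) →* MulAut ↥ψ0.range :=
    (MulAut.congr e0).toMonoidHom.comp P.normalizerMonoidHom with hμ
  have hUle : μ.range ≤ F.autFsub ψ0.range := by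
    rintro _ ⟨xN, rfl⟩
    exact F.aux_congr_mem (F.target_mem' hψ0) (aux_autSsub_le F P ⟨xN, rfl⟩)
  have hUp : IsPGroup p μ.range := aux_pgroup_range (hS.to_subgroup (Subgroup.normalizer (P : Set S))) μ
  obtain ⟨gR, hgR⟩ := aux_conj_into (G := ↥(F.autFsub ψ0.range))
    (aux_pgroup_subgroupOf (aux_pgroup_autSsub hS ψ0.range))
    ((F.aux_autSIsSylow_iff hS ψ0.range).mp hFAR)
    (aux_pgroup_subgroupOf hUp)
  set χ : MulAut ↥ψ0.range := (gR : MulAut ↥ψ0.range) with hχdef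
  have hχF : χ ∈ F.autFsub ψ0.range := gR.2
  set ψ : ↥P →* S := (autj ψ0.range χ).comp (ψ0.codRestrict ψ0.range
    (F.mapsTo' (F.target_mem' hψ0))) with hψdef
  have hψF : ψ ∈ F.Hom P ψ0.range := F.comp_mem' (F.target_mem' hψ0) hχF
  have hψinj : Function.Injective ψ := F.injective' hψF
  have hψval : ∀ u : ↥P, ψ u = ((χ (e0 u) : ↥ψ0.range) : S) := fun u => rfl
  have hψrange : ψ.range = ψ0.range := by
    apply le_antisymm (F.aux_range_le hψF)
    intro x hx
    refine ⟨e0.symm (χ⁻¹ ⟨x, hx⟩), ?_⟩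
    rw [hψval, MulEquiv.apply_symm_apply]
    show ((χ (χ⁻¹ ⟨x, hx⟩) : ↥ψ0.range) : S) = x
    have h8 : χ (χ⁻¹ ⟨x, hx⟩) = ⟨x, hx⟩ := by
      rw [← MulAut.mul_apply, mul_inv_cancel]
      rfl
    rw [h8]
  have hNle : (Subgroup.normalizer (P : Set S)) ≤ Nphi P ψ := by
    intro x hx
    rw [aux_mem_Nphi_iff]
    refine ⟨hx, ?_⟩
    have h1 : (⟨μ ⟨x, hx⟩, hUle ⟨⟨x, hx⟩, rfl⟩⟩ : ↥(F.autFsub ψ0.range)) ∈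
        μ.range.subgroupOf (F.autFsub ψ0.range) := by
      rw [Subgroup.mem_subgroupOf]; exact ⟨⟨x, hx⟩, rfl⟩
    have h2 := hgR _ h1
    rw [Subgroup.mem_subgroupOf] at h2
    obtain ⟨y, hy⟩ := h2
    refine ⟨(y : S), by rw [hψrange]; exact y.2, ?_⟩
    intro u v hu hv hveq
    have h3 : (⟨v, hv⟩ : ↥P) = P.normalizerMonoidHom ⟨x, hx⟩ ⟨u, hu⟩ := Subtype.ext hveq
    have h4 : e0 (P.normalizerMonoidHom ⟨x, hx⟩ ⟨u, hu⟩) = (μ ⟨x, hx⟩) (e0 ⟨u, hu⟩) := by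
      show e0 _ = (MulAut.congr e0) (P.normalizerMonoidHom ⟨x, hx⟩) (e0 ⟨u, hu⟩)
      rw [show (MulAut.congr e0) (P.normalizerMonoidHom ⟨x, hx⟩) (e0 ⟨u, hu⟩)
        = e0 (P.normalizerMonoidHom ⟨x, hx⟩ (e0.symm (e0 ⟨u, hu⟩))) from rfl,
        MulEquiv.symm_apply_apply]
    have h5 : χ ((μ ⟨x, hx⟩) (e0 ⟨u, hu⟩)) = (χ * μ ⟨x, hx⟩ * χ⁻¹) (χ (e0 ⟨u, hu⟩)) := by
      simp [MulAut.mul_apply, MulAut.inv_def]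
    have hy' : ψ0.range.normalizerMonoidHom y = χ * μ ⟨x, hx⟩ * χ⁻¹ := hy
    show ψ ⟨v, hv⟩ = (y : S) * ψ ⟨u, hu⟩ * (y : S)⁻¹
    rw [hψval, h3, h4, h5, ← hy']
    rfl
  have hψtop : ψ ∈ F.Hom P ⊤ := F.aux_mem_target hψF (fun u => Subgroup.mem_top _)
  have hfcψ : Collection.FullyCentralized F.Hom ψ.range := by rw [hψrange]; exact hFCR
  obtain ⟨g, hgF, hginj, hgnorm, hgext⟩ := F.aux_key hII hψtop hfcψ hNle
  have hginj' : Function.Injective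
      (fun x : ↥(Subgroup.normalizer (P : Set S)) => (⟨g x, hgnorm x⟩ : ↥(Subgroup.normalizer (ψ.range : Set S)))) := by
    intro x1 x2 h12
    have h13 : g x1 = g x2 := congrArg Subtype.val h12
    exact hginj h13
  have hcard1 : Nat.card (Subgroup.normalizer (P : Set S)) ≤ Nat.card (Subgroup.normalizer (ψ.range : Set S)) :=
    Nat.card_le_card_of_injective _ hginj'
  have hIC : F.Hom.IsConj P ψ.range := ⟨ψ, F.target_mem' hψF, rfl⟩
  have hcard2 : Nat.card (Subgroup.normalizer (ψ.range : Set S)) ≤ Nat.card (Subgroup.normalizer (P : Set S)) := hfn ψ.range hIC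
  have hbij : Function.Bijective
      (fun x : ↥(Subgroup.normalizer (P : Set S)) => (⟨g x, hgnorm x⟩ : ↥(Subgroup.normalizer (ψ.range : Set S)))) :=
    (Nat.bijective_iff_injective_and_card _).mpr ⟨hginj', le_antisymm hcard1 hcard2⟩
  set gE := Equiv.ofBijective _ hbij with hgE
  have hCC : Nat.card (Subgroup.centralizer ((ψ.range : Subgroup S) : Set S)) ≤
      Nat.card (Subgroup.centralizer (P : Set S)) := by
    have hzn : ∀ z : ↥(Subgroup.centralizer ((ψ.range : Subgroup S) : Set S)),
        (z : S) ∈ (Subgroup.normalizer (ψ.range : Set S)) := fun z => aux_centralizer_le_normalizer _ z.2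
    have hcent : ∀ z : ↥(Subgroup.centralizer ((ψ.range : Subgroup S) : Set S)),
        ((gE.symm ⟨(z : S), hzn z⟩ : ↥(Subgroup.normalizer (P : Set S))) : S) ∈
          Subgroup.centralizer (P : Set S) := by
      intro z
      set x := gE.symm ⟨(z : S), hzn z⟩ with hxdef
      have hgx : g x = (z : S) := by
        have h6 := gE.apply_symm_apply ⟨(z : S), hzn z⟩
        have h7 := congrArg Subtype.val h6
        exact h7
      rw [Subgroup.mem_centralizer_iff]
      intro u hu
      -- show u * x = x * u
      have hmem1 : (x : S) * u * (x : S)⁻¹ ∈ P :=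
        (Subgroup.mem_normalizer_iff.mp x.2 u).mp hu
      have heq1 : ψ ⟨(x : S) * u * (x : S)⁻¹, hmem1⟩ = ψ ⟨u, hu⟩ := by
        have e1 : ψ ⟨(x : S) * u * (x : S)⁻¹, hmem1⟩
            = g (x * ⟨u, Subgroup.le_normalizer hu⟩ * x⁻¹) := by
          rw [← hgext ((x : S) * u * (x : S)⁻¹) hmem1
            (mul_mem (mul_mem x.2 (Subgroup.le_normalizer hu)) (inv_mem x.2))]
          exact congrArg g (Subtype.ext rfl)
        have e2 : g (x * ⟨u, Subgroup.le_normalizer hu⟩ * x⁻¹)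
            = g x * g ⟨u, Subgroup.le_normalizer hu⟩ * (g x)⁻¹ := by
          rw [map_mul, map_mul, map_inv]
        have e3 : g ⟨u, Subgroup.le_normalizer hu⟩ = ψ ⟨u, hu⟩ := hgext u hu (Subgroup.le_normalizer hu)
        have e4 : ψ ⟨u, hu⟩ ∈ ψ.range := ⟨⟨u, hu⟩, rfl⟩
        have e5 : ψ ⟨u, hu⟩ * (z : S) = (z : S) * ψ ⟨u, hu⟩ :=
          Subgroup.mem_centralizer_iff.mp z.2 _ e4
        rw [e1, e2, e3, hgx]
        rw [← e5]
        group
      have heq2 : (⟨(x : S) * u * (x : S)⁻¹, hmem1⟩ : ↥P) = ⟨u, hu⟩ := hψinj heq1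
      have heq3 : (x : S) * u * (x : S)⁻¹ = u := congrArg Subtype.val heq2
      calc u * (x : S) = ((x : S) * u * (x : S)⁻¹) * (x : S) := by rw [heq3]
        _ = (x : S) * u := by group
    refine Nat.card_le_card_of_injective
      (fun z => ⟨((gE.symm ⟨(z : S), hzn z⟩ : ↥(Subgroup.normalizer (P : Set S))) : S), hcent z⟩) ?_
    intro z1 z2 h12
    have h12' : ((gE.symm ⟨(z1 : S), hzn z1⟩ : ↥(Subgroup.normalizer (P : Set S))) : S)
        = ((gE.symm ⟨(z2 : S), hzn z2⟩ : ↥(Subgroup.normalizer (P : Set S))) : S) := by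
      simpa using congrArg Subtype.val h12
    have h13 : (gE.symm ⟨(z1 : S), hzn z1⟩ : ↥(Subgroup.normalizer (P : Set S)))
        = gE.symm ⟨(z2 : S), hzn z2⟩ := Subtype.ext h12'
    have h14 := congrArg (fun w => (gE w : ↥(Subgroup.normalizer (ψ.range : Set S)))) h13
    simp only [Equiv.apply_symm_apply] at h14
    have h15 : ((⟨(z1 : S), hzn z1⟩ : ↥(Subgroup.normalizer (ψ.range : Set S))) : S)
        = ((⟨(z2 : S), hzn z2⟩ : ↥(Subgroup.normalizer (ψ.range : Set S))) : S) := congrArg Subtype.val h14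
    exact Subtype.ext h15
  intro Q hQ
  have h2 : Nat.card (Subgroup.centralizer (Q : Set S)) ≤
      Nat.card (Subgroup.centralizer ((ψ0.range : Subgroup S) : Set S)) :=
    hFCR Q (F.aux_isConj_trans (F.aux_isConj_symm ⟨ψ0, hψ0, rfl⟩) hQ)
  have h3 : Nat.card (Subgroup.centralizer ((ψ.range : Subgroup S) : Set S)) =
      Nat.card (Subgroup.centralizer ((ψ0.range : Subgroup S) : Set S)) := by
    rw [hψrange]
  omega
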